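/- The category A = Fun(C, G) has enough flat objects: every functor F in A admits an epimorphism P → F with P flat. -/

import Mathlib

set_option linter.unusedSectionVars false

open CategoryTheory CategoryTheory.Limits CategoryTheory.MonoidalCategory
  CategoryTheory.MonoidalClosed

universe v u

namespace FlatFunctorsPaper

variable {G : Type u} [Category.{v} G] [Abelian G] [MonoidalCategory G]
  [SymmetricCategory G] [MonoidalClosed G] [MonoidalPreadditive G]

/-- `X⁺ = [X, J]`, the internal hom into `J`. -/
noncomputable def pObj (J X : G) : G := (ihom X).obj J

/-- The contravariant functorial action of `(-)⁺ = [-, J]`. -/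
noncomputable def pMap (J : G) {X Y : G} (f : X ⟶ Y) : pObj J Y ⟶ pObj J X :=
  (MonoidalClosed.pre f).app J

@[simp] lemma pMap_id (J X : G) : pMap J (𝟙 X) = 𝟙 (pObj J X) := by
  simp [pMap, pObj]

@[simp] lemma pMap_comp (J : G) {X Y Z : G} (f : X ⟶ Y) (g : Y ⟶ Z) :
    pMap J (f ≫ g) = pMap J g ≫ pMap J f := by
  simp [pMap]; rfl

@[simp] lemma pMap_zero (J : G) (X Y : G) : pMap J (0 : X ⟶ Y) = 0 := by
  apply MonoidalClosed.uncurry_injective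
  rw [pMap]
  erw [MonoidalClosed.uncurry_pre, MonoidalClosed.uncurry_eq]
  erw [MonoidalPreadditive.whiskerLeft_zero]
  simp; rfl

/-- The canonical biduality morphism `X ⟶ X⁺⁺` in `G`. -/
noncomputable def bid (J X : G) : X ⟶ pObj J (pObj J X) :=
  MonoidalClosed.curry ((β_ (pObj J X) X).hom ≫ (ihom.ev X).app J)

lemma bid_natural (J : G) {X Y : G} (f : X ⟶ Y) :
    f ≫ bid J Y = bid J X ≫ pMap J (pMap J f) := by
  apply MonoidalClosed.uncurry_injective
  erw [MonoidalClosed.uncurry_natural_left (f := f) (g := bid J Y),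
    MonoidalClosed.uncurry_natural_left (f := bid J X) (g := pMap J (pMap J f))]
  dsimp only [bid, pMap, pObj]
  erw [MonoidalClosed.uncurry_curry, MonoidalClosed.uncurry_pre]
  erw [whisker_exchange_assoc]
  erw [← MonoidalClosed.uncurry_eq, MonoidalClosed.uncurry_curry]
  simp

section Dual

variable {D : Type v} [SmallCategory D]

/-- The objectwise dual `F⁺` of a functor `F : D ⥤ G`, a functor `Dᵒᵖ ⥤ G`. -/
@[simps] noncomputable def dObj (J : G) (F : D ⥤ G) : Dᵒᵖ ⥤ G where
  obj c := pObj J (F.obj c.unop)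
  map f := pMap J (F.map f.unop)
  map_id c := by simp
  map_comp f g := by simp

/-- The dual of a natural transformation. -/
@[simps] noncomputable def dMap (J : G) {F F' : D ⥤ G} (η : F ⟶ F') :
    dObj J F' ⟶ dObj J F where
  app c := pMap J (η.app c.unop)
  naturality _ _ f := by
    erw [dObj_map, dObj_map]
    erw [← pMap_comp, ← pMap_comp, NatTrans.naturality]

@[simp] lemma dMap_id (J : G) (F : D ⥤ G) : dMap J (𝟙 F) = 𝟙 (dObj J F) := by
  ext c; simp; rfl

@[simp] lemma dMap_comp (J : G) {F F' F'' : D ⥤ G} (α : F ⟶ F') (β : F' ⟶ F'') :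
    dMap J (α ≫ β) = dMap J β ≫ dMap J α := by
  ext c; simp; rfl

@[simp] lemma dMap_zero (J : G) (F F' : D ⥤ G) : dMap J (0 : F ⟶ F') = 0 := by
  ext c; simp; rfl

/-- The double dual `F⁺⁺` of a functor `F : D ⥤ G`. -/
noncomputable def ddObj (J : G) (F : D ⥤ G) : D ⥤ G := opOp D ⋙ dObj J (dObj J F)

/-- The canonical natural transformation `φ_F : F ⟶ F⁺⁺`. -/
noncomputable def phi (J : G) (F : D ⥤ G) : F ⟶ ddObj J F where
  app c := bid J (F.obj c)
  naturality _ _ f := bid_natural J (F.map f)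

/-- The dual of a short exact sequence (short complex) of functors. -/
noncomputable def dSC (J : G) (S : ShortComplex (D ⥤ G)) : ShortComplex (Dᵒᵖ ⥤ G) :=
  ShortComplex.mk (dMap J S.g) (dMap J S.f) (by rw [← dMap_comp, S.zero, dMap_zero])

/-- A short exact sequence of functors is *pure* if its dual splits. -/
def IsPure (J : G) (S : ShortComplex (D ⥤ G)) : Prop := Nonempty ((dSC J S).Splitting)

/-- A functor `F` is *flat* if every short exact sequence ending in `F` is pure. -/
def IsFlat (J : G) (F : D ⥤ G) : Prop :=
  ∀ ⦃K E : D ⥤ G⦄ (i : K ⟶ E) (p : E ⟶ F) (w : i ≫ p = 0),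
    (ShortComplex.mk i p w).ShortExact → IsPure J (ShortComplex.mk i p w)

/-- A functor `X` is *cotorsion* if every short exact sequence `0 → X → E → F → 0`
with `F` flat splits. -/
def IsCotorsion (J : G) (X : D ⥤ G) : Prop :=
  ∀ ⦃E F : D ⥤ G⦄ (i : X ⟶ E) (p : E ⟶ F) (w : i ≫ p = 0),
    (ShortComplex.mk i p w).ShortExact → IsFlat J F →
      Nonempty (ShortComplex.mk i p w).Splitting

/-- A functor `P` is *pure injective* if every morphism into `P` extends along
pure monomorphisms. -/
def IsPureInjective (J : G) (P : D ⥤ G) : Prop :=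
  ∀ ⦃K E L : D ⥤ G⦄ (i : K ⟶ E) (p : E ⟶ L) (w : i ≫ p = 0),
    (ShortComplex.mk i p w).ShortExact → IsPure J (ShortComplex.mk i p w) →
      ∀ f : K ⟶ P, ∃ h : E ⟶ P, i ≫ h = f

end Dual

section ObjectLevel

/-- The dual of a short exact sequence (short complex) in `G`. -/
noncomputable def dSCG (J : G) (S : ShortComplex G) : ShortComplex G :=
  ShortComplex.mk (pMap J S.g) (pMap J S.f) (by rw [← pMap_comp, S.zero, pMap_zero])

/-- A short exact sequence in `G` is *pure* if its dual splits. -/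
def IsPureG (J : G) (S : ShortComplex G) : Prop := Nonempty ((dSCG J S).Splitting)

/-- An object `X` of `G` is *flat* if every short exact sequence ending in `X` is pure. -/
def IsFlatG (J X : G) : Prop :=
  ∀ ⦃K E : G⦄ (i : K ⟶ E) (p : E ⟶ X) (w : i ≫ p = 0),
    (ShortComplex.mk i p w).ShortExact → IsPureG J (ShortComplex.mk i p w)

/-- An object `X` of `G` is *cotorsion* if every short exact sequence
`0 → X → E → F → 0` with `F` flat splits. -/
def IsCotorsionG (J X : G) : Prop :=
  ∀ ⦃E F : G⦄ (i : X ⟶ E) (p : E ⟶ F) (w : i ≫ p = 0),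
    (ShortComplex.mk i p w).ShortExact → IsFlatG J F →
      Nonempty (ShortComplex.mk i p w).Splitting

/-- The flat objects and the cotorsion objects form a complete cotorsion theory in `G`:
every object has a special flat precover and a special cotorsion preenvelope. -/
def CompleteFlatCotorsionTheoryG (J : G) : Prop :=
  ∀ X : G,
    (∃ (Cx F : G) (i : Cx ⟶ F) (p : F ⟶ X) (w : i ≫ p = 0),
      (ShortComplex.mk i p w).ShortExact ∧ IsFlatG J F ∧ IsCotorsionG J Cx) ∧
    (∃ (Cx F : G) (i : X ⟶ Cx) (p : Cx ⟶ F) (w : i ≫ p = 0),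
      (ShortComplex.mk i p w).ShortExact ∧ IsCotorsionG J Cx ∧ IsFlatG J F)

end ObjectLevel

attribute [reducible] pObj dSCG dSC dObj ddObj

section Transpose
variable (J : G)

/-- transpose of a map into an internal dual -/
noncomputable def tr {T X : G} (t : T ⟶ pObj J X) : X ⟶ pObj J T :=
  MonoidalClosed.curry ((β_ T X).hom ≫ MonoidalClosed.uncurry t)

lemma uncurry_tr {T X : G} (t : T ⟶ pObj J X) :
    MonoidalClosed.uncurry (tr J t) = (β_ T X).hom ≫ MonoidalClosed.uncurry t :=
  MonoidalClosed.uncurry_curry _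

@[simp] lemma tr_tr {T X : G} (t : T ⟶ pObj J X) : tr J (tr J t) = t := by
  apply MonoidalClosed.uncurry_injective
  rw [uncurry_tr, uncurry_tr, ← Category.assoc, SymmetricCategory.symmetry, Category.id_comp]

lemma tr_injective {T X : G} : Function.Injective (tr J : (T ⟶ pObj J X) → (X ⟶ pObj J T)) :=
  fun a b h => by rw [← tr_tr J a, h, tr_tr]

lemma tr_comp {T' T X : G} (h : T' ⟶ T) (t : T ⟶ pObj J X) :
    tr J (h ≫ t) = tr J t ≫ pMap J h := by
  apply MonoidalClosed.uncurry_injective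
  rw [uncurry_tr, MonoidalClosed.uncurry_natural_left, MonoidalClosed.uncurry_natural_left,
    pMap, MonoidalClosed.uncurry_pre]
  dsimp only [pObj]
  rw [whisker_exchange_assoc, ← MonoidalClosed.uncurry_eq,
    uncurry_tr, BraidedCategory.braiding_naturality_left_assoc]

lemma comp_tr {T X' X : G} (k : X' ⟶ X) (t : T ⟶ pObj J X) :
    k ≫ tr J t = tr J (t ≫ pMap J k) := by
  apply MonoidalClosed.uncurry_injective
  rw [MonoidalClosed.uncurry_natural_left, uncurry_tr, uncurry_tr,
    MonoidalClosed.uncurry_natural_left, pMap, MonoidalClosed.uncurry_pre]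
  dsimp only [pObj]
  rw [whisker_exchange_assoc, ← MonoidalClosed.uncurry_eq, BraidedCategory.braiding_naturality_right_assoc]

@[simp] lemma tr_zero {T X : G} : tr J (0 : T ⟶ pObj J X) = 0 := by
  apply MonoidalClosed.uncurry_injective
  rw [uncurry_tr]
  have h0 : MonoidalClosed.uncurry (0 : T ⟶ pObj J X) = 0 := by
    rw [MonoidalClosed.uncurry_eq]; simp
  have h0' : MonoidalClosed.uncurry (0 : X ⟶ pObj J T) = 0 := by
    rw [MonoidalClosed.uncurry_eq]; simp
  rw [h0, h0', comp_zero]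

end Transpose

section GLevel
variable (J : G)

lemma pMap_mono_of_epi {X Y : G} (h : X ⟶ Y) [Epi h] : Mono (pMap J h) :=
  ⟨fun u v huv => by
    apply tr_injective J
    rw [← cancel_epi h, comp_tr, comp_tr, huv]⟩

variable [HasColimits G]

lemma pSigma_hom_ext {I : Type v} {X : I → G} {Z : G} {u v : Z ⟶ pObj J (∐ X)}
    (h : ∀ i, u ≫ pMap J (Sigma.ι X i) = v ≫ pMap J (Sigma.ι X i)) : u = v := by
  apply tr_injective J
  apply Sigma.hom_ext
  intro i
  rw [comp_tr, comp_tr, h i]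

/-- The dual of a cokernel diagram is a kernel diagram. -/
noncomputable def pMapIsKernel {K E Q : G} (f : K ⟶ E) (g : E ⟶ Q) (w : f ≫ g = 0) [Epi g]
    (hg : IsColimit (CokernelCofork.ofπ g w)) :
    IsLimit (KernelFork.ofι (pMap J g)
      (show pMap J g ≫ pMap J f = 0 by rw [← pMap_comp, w, pMap_zero])) := by
  have : Mono (pMap J g) := pMap_mono_of_epi J g
  refine KernelFork.IsLimit.ofι' _ _ (fun {T} t ht => ?_)
  have hft : f ≫ tr J t = 0 := by rw [comp_tr, ht, tr_zero]
  obtain ⟨v, hv⟩ := CokernelCofork.IsColimit.desc' hg (tr J t) hft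
  simp only [Cofork.π_ofπ] at hv
  refine ⟨tr J v, ?_⟩
  rw [← tr_comp, hv, tr_tr]
end GLevel

section PullbackSES
variable (J : G)

lemma pullback_shortExact {K E X Y : G} {f : K ⟶ E} {g : E ⟶ X} {w : f ≫ g = 0}
    (hS : (ShortComplex.mk f g w).ShortExact) (ι : Y ⟶ X) :
    (ShortComplex.mk (pullback.lift f (0 : K ⟶ Y) (by rw [w, zero_comp]))
      (pullback.snd g ι) (pullback.lift_snd _ _ _)).ShortExact := by
  haveI : Mono f := hS.mono_f
  haveI : Epi g := hS.epi_g
  have hlf : pullback.lift f (0 : K ⟶ Y) (by rw [w, zero_comp]) ≫ pullback.fst g ι = f :=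
    pullback.lift_fst _ _ _
  haveI hm : Mono (pullback.lift f (0 : K ⟶ Y) (by rw [w, zero_comp]) : K ⟶ pullback g ι) :=
    mono_of_mono_fac hlf
  refine ShortComplex.ShortExact.mk' ?_ hm inferInstance
  apply ShortComplex.exact_of_f_is_kernel
  refine KernelFork.IsLimit.ofι' _ _ (fun {T} t ht => ?_)
  have htg : (t ≫ pullback.fst g ι) ≫ g = 0 := by
    rw [Category.assoc, pullback.condition, ← Category.assoc, ht, zero_comp]
  refine ⟨hS.exact.lift (t ≫ pullback.fst g ι) htg, ?_⟩
  apply pullback.hom_ext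
  · rw [Category.assoc, hlf, hS.exact.lift_f]
  · rw [Category.assoc, pullback.lift_snd, comp_zero, ht]

end PullbackSES

section LemmaA
variable (J : G) [HasColimits G] [AB5 G]

lemma sigma_flat_isPure {I : Type v} [Nonempty I] (Q : I → G) (hQ : ∀ i, IsFlatG J (Q i))
    {K E : G} (f : K ⟶ E) (g : E ⟶ ∐ Q) (w : f ≫ g = 0)
    (hS : (ShortComplex.mk f g w).ShortExact) :
    IsPureG J (ShortComplex.mk f g w) := by
  haveI : Mono f := hS.mono_f
  haveI : Epi g := hS.epi_g
  haveI : HasFiniteBiproducts G := Abelian.hasFiniteBiproducts (C := G)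
  haveI : AB4 G := AB4.of_AB5 G
  classical
  obtain ⟨i0⟩ := ‹Nonempty I›
  -- pullback data
  let A : ∀ i, (pullback g (Sigma.ι Q i) : G) ⟶ E := fun i => pullback.fst g (Sigma.ι Q i)
  let B : ∀ i, (pullback g (Sigma.ι Q i) : G) ⟶ Q i := fun i => pullback.snd g (Sigma.ι Q i)
  let k : ∀ i, K ⟶ (pullback g (Sigma.ι Q i) : G) :=
    fun i => pullback.lift f (0 : K ⟶ Q i) (by rw [w, zero_comp])
  have hkA : ∀ i, k i ≫ A i = f := fun i => pullback.lift_fst _ _ _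
  have hkB : ∀ i, k i ≫ B i = 0 := fun i => pullback.lift_snd _ _ _
  have hSE : ∀ i, (ShortComplex.mk (k i) (B i) (hkB i)).ShortExact :=
    fun i => pullback_shortExact hS (Sigma.ι Q i)
  haveI hBepi : ∀ i, Epi (B i) := fun i => (hSE i).epi_g
  let spl : ∀ i, (dSCG J (ShortComplex.mk (k i) (B i) (hkB i))).Splitting :=
    fun i => (hQ i (k i) (B i) (hkB i) (hSE i)).some
  -- the retraction R
  let cmp : ∀ i, pObj J E ⟶ pObj J (Q i) := fun i => pMap J (A i) ≫ (spl i).r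
  let R : pObj J E ⟶ pObj J (∐ Q) := tr J (Sigma.desc fun i => tr J (cmp i))
  have hRproj : ∀ i, R ≫ pMap J (Sigma.ι Q i) = cmp i := fun i => by
    rw [show R ≫ pMap J (Sigma.ι Q i) = tr J (Sigma.ι Q i ≫ Sigma.desc fun j => tr J (cmp j))
        from (tr_comp J _ _).symm, Sigma.ι_desc, tr_tr]
  have hfr : pMap J g ≫ R = 𝟙 (pObj J (∐ Q)) := by
    apply pSigma_hom_ext J
    intro i
    rw [Category.assoc, hRproj i, Category.id_comp]
    show pMap J g ≫ pMap J (A i) ≫ (spl i).r = pMap J (Sigma.ι Q i)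
    rw [← Category.assoc, ← pMap_comp, pullback.condition, pMap_comp, Category.assoc]
    have := (spl i).f_r
    dsimp only [dSCG] at this
    rw [this, Category.comp_id]
  -- the epimorphism e
  let e : (∐ fun i => (pullback g (Sigma.ι Q i) : G)) ⟶ E := Sigma.desc A
  have hIe : ∀ i, Sigma.ι _ i ≫ e = A i := fun i => Sigma.ι_desc _ _
  haveI hee : Epi e := by
    apply Preadditive.epi_of_cancel_zero
    intro Z c hc
    have hAc : ∀ i, A i ≫ c = 0 := fun i => by
      rw [← hIe i, Category.assoc, hc, comp_zero]
    have hfc : f ≫ c = 0 := by rw [← hkA i0, Category.assoc, hAc i0, comp_zero]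
    have hcb : ∀ i, Sigma.ι Q i ≫ hS.exact.desc c hfc = 0 := fun i => by
      rw [← cancel_epi (B i), ← Category.assoc, ← pullback.condition, Category.assoc,
        hS.exact.g_desc, hAc i, comp_zero]
    have : hS.exact.desc c hfc = 0 := by
      apply Sigma.hom_ext; intro i; rw [hcb i, comp_zero]
    rw [← hS.exact.g_desc c hfc, this, comp_zero]
  -- kernel of the coproduct of the B's
  let bn : Discrete.functor (fun i => (pullback g (Sigma.ι Q i) : G)) ⟶ Discrete.functor Q :=
    Discrete.natTrans (fun i => B i.as)
  let kn : Discrete.functor (fun _ : I => K) ⟶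
      Discrete.functor (fun i => (pullback g (Sigma.ι Q i) : G)) :=
    Discrete.natTrans (fun i => k i.as)
  have hkb : kn ≫ bn = 0 := by
    ext ⟨i⟩
    simp only [NatTrans.comp_app, Discrete.natTrans_app, NatTrans.app_zero]
    exact hkB i
  haveI : (colim (J := Discrete I) (C := G)).PreservesZeroMorphisms := by
    haveI := (colimConstAdj (J := Discrete I) (C := G)).isLeftAdjoint
    infer_instance
  have hker0 : IsLimit (KernelFork.ofι kn hkb) := by
    apply evaluationJointlyReflectsLimits
    rintro ⟨i⟩
    exact (KernelFork.isLimitMapConeEquiv _ _).symm ((hSE i).fIsKernel)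
  haveI : PreservesFiniteLimits (colim (J := Discrete I) (C := G)) :=
    inferInstance
  have hker : IsLimit (KernelFork.ofι (colim.map kn)
      (by simp only [← colim.map_comp, hkb, Functor.map_zero]) : Fork (colim.map bn) 0) :=
    isLimitForkMapOfIsLimit' colim hkb hker0
  -- the map mh and its descent
  let mh : (∐ fun i => (pullback g (Sigma.ι Q i) : G)) ⟶ pObj J (pObj J K) :=
    Sigma.desc fun i => tr J ((spl i).s)
  have hImh : ∀ i, Sigma.ι _ i ≫ mh = tr J ((spl i).s) := fun i => Sigma.ι_desc _ _
  have hBmape : e ≫ g = colim.map bn := by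
    apply Sigma.hom_ext
    intro i
    rw [← Category.assoc, hIe i, pullback.condition]
    exact (show Sigma.ι (fun j => (pullback g (Sigma.ι Q j) : G)) i ≫ colim.map bn
      = B i ≫ Sigma.ι Q i from ι_colimMap bn ⟨i⟩).symm
  have hwB : kernel.ι e ≫ colim.map bn = 0 := by
    rw [← hBmape, ← Category.assoc, kernel.condition, zero_comp]
  obtain ⟨u, hu⟩ := KernelFork.IsLimit.lift' hker (kernel.ι e) hwB
  simp only [Fork.ι_ofι] at hu
  have hknmh : colim.map kn ≫ mh = Sigma.desc (fun _ : I => 𝟙 K) ≫ tr J (𝟙 (pObj J K)) := by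
    apply Sigma.hom_ext
    intro i
    rw [← Category.assoc, ← Category.assoc]
    rw [show Sigma.ι (fun _ : I => K) i ≫ colim.map kn
      = k i ≫ Sigma.ι (fun j => (pullback g (Sigma.ι Q j) : G)) i from ι_colimMap kn ⟨i⟩]
    rw [Category.assoc, hImh i, Sigma.ι_desc, Category.id_comp]
    rw [comp_tr]
    congr 1
    have := (spl i).s_g
    dsimp only [dSCG] at this
    exact this
  have hknme : colim.map kn ≫ e = Sigma.desc (fun _ : I => 𝟙 K) ≫ f := by
    apply Sigma.hom_ext
    intro i
    rw [← Category.assoc, show Sigma.ι (fun _ : I => K) i ≫ colim.map kn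
      = k i ≫ Sigma.ι (fun j => (pullback g (Sigma.ι Q j) : G)) i from ι_colimMap kn ⟨i⟩,
      Category.assoc, hIe i, hkA i, ← Category.assoc, Sigma.ι_desc, Category.id_comp]
  have hun : u ≫ Sigma.desc (fun _ : I => 𝟙 K) = 0 := by
    rw [← cancel_mono f, Category.assoc, ← hknme, ← Category.assoc, hu, kernel.condition,
      zero_comp]
  have hkermh : kernel.ι e ≫ mh = 0 := by
    rw [← hu, Category.assoc, hknmh, ← Category.assoc, hun, zero_comp]
  let m : E ⟶ pObj J (pObj J K) := Abelian.epiDesc e mh hkermh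
  have hem : e ≫ m = mh := Abelian.comp_epiDesc e mh hkermh
  have hAm : ∀ i, A i ≫ m = tr J ((spl i).s) := fun i => by
    rw [← hIe i, Category.assoc, hem, hImh i]
  let Sv : pObj J K ⟶ pObj J E := tr J m
  have hsg : Sv ≫ pMap J f = 𝟙 (pObj J K) := by
    rw [show Sv ≫ pMap J f = tr J (f ≫ m) from (tr_comp J f m).symm]
    have hfm : f ≫ m = tr J (𝟙 (pObj J K)) := by
      rw [← hkA i0, Category.assoc, hAm i0, comp_tr]
      congr 1
      have := (spl i0).s_g
      dsimp only [dSCG] at this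
      exact this
    rw [hfm, tr_tr]
  have hid : R ≫ pMap J g + pMap J f ≫ Sv = 𝟙 (pObj J E) := by
    haveI : Mono (pMap J e) := pMap_mono_of_epi J e
    rw [← cancel_mono (pMap J e)]
    apply pSigma_hom_ext J
    intro i
    have hea : pMap J e ≫ pMap J (Sigma.ι _ i) = pMap J (A i) := by
      rw [← pMap_comp, hIe i]
    rw [Category.assoc, Category.assoc, hea, Preadditive.add_comp]
    have h1 : R ≫ pMap J g ≫ pMap J (A i) =
        pMap J (A i) ≫ (spl i).r ≫ pMap J (B i) := by
      rw [← pMap_comp, pullback.condition, pMap_comp, ← Category.assoc, hRproj i]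
      simp only [cmp, Category.assoc]
      rfl
    have h2 : pMap J f ≫ Sv ≫ pMap J (A i) = pMap J (A i) ≫ pMap J (k i) ≫ (spl i).s := by
      rw [show Sv ≫ pMap J (A i) = tr J (A i ≫ m) from (tr_comp J (A i) m).symm, hAm i,
        tr_tr, ← hkA i, pMap_comp, Category.assoc]
    rw [Category.assoc, Category.assoc, h1]
    rw [show pMap J f ≫ Sv ≫ pMap J (A i) = pMap J (A i) ≫ pMap J (k i) ≫ (spl i).s from h2]
    rw [← Preadditive.comp_add]
    have := (spl i).id
    dsimp only [dSCG] at this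
    rw [this, Category.comp_id, Category.id_comp]
  exact ⟨{ r := R, s := Sv, f_r := hfr, s_g := hsg, id := hid }⟩

end LemmaA


section FunctorLevelAux
variable (J : G) [HasColimits G]

/-- projection computation for transposed descents -/
lemma tr_desc_proj {I : Type v} (X : I → G) {T : G} (t : ∀ i, T ⟶ pObj J (X i)) (i : I) :
    tr J (Sigma.desc fun j => tr J (t j)) ≫ pMap J (Sigma.ι X i) = t i := by
  rw [show tr J (Sigma.desc fun j => tr J (t j)) ≫ pMap J (Sigma.ι X i)
      = tr J (Sigma.ι X i ≫ Sigma.desc fun j => tr J (t j)) from (tr_comp J _ _).symm,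
    Sigma.ι_desc, tr_tr]

end FunctorLevelAux

section FunctorLevel
variable (J : G) {C : Type v} [SmallCategory C] [HasColimits G]

/-- The free functor `⊕_c L_c(Q_c)`, objectwise a coproduct of the `Q_c`. -/
@[simps] noncomputable def freeFunctor (Q : C → G) : C ⥤ G where
  obj d := ∐ (fun x : Σ c : C, (c ⟶ d) => Q x.1)
  map {d d'} ψ := Sigma.desc (fun x => Sigma.ι (fun y : Σ c : C, (c ⟶ d') => Q y.1) ⟨x.1, x.2 ≫ ψ⟩)
  map_id d := by
    apply Sigma.hom_ext; rintro ⟨c, φ⟩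
    rw [Sigma.ι_desc, Category.comp_id, Category.comp_id]
  map_comp {d d' d''} ψ φ := by
    apply Sigma.hom_ext; rintro ⟨c, χ⟩
    simp only [Sigma.ι_desc, ← Category.assoc]
    rw [Category.assoc]

attribute [reducible] freeFunctor

/-- The canonical natural transformation from the free functor. -/
@[simps] noncomputable def freeCounit (Q : C → G) (F : C ⥤ G) (q : ∀ c, Q c ⟶ F.obj c) :
    freeFunctor Q ⟶ F where
  app d := Sigma.desc (fun x => q x.1 ≫ F.map x.2)
  naturality d d' ψ := by
    apply Sigma.hom_ext
    intro x
    simp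

lemma freeCounit_epi (Q : C → G) (F : C ⥤ G) (q : ∀ c, Q c ⟶ F.obj c)
    (hq : ∀ c, Epi (q c)) : Epi (freeCounit Q F q) := by
  haveI : ∀ d, Epi ((freeCounit Q F q).app d) := fun d => by
    have h : Sigma.ι (fun x : Σ c : C, (c ⟶ d) => Q x.1) ⟨d, 𝟙 d⟩ ≫ (freeCounit Q F q).app d
        = q d := by simp
    haveI : Epi (Sigma.ι (fun x : Σ c : C, (c ⟶ d) => Q x.1) ⟨d, 𝟙 d⟩ ≫
        (freeCounit Q F q).app d) := by rw [h]; exact hq d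
    exact epi_of_epi (Sigma.ι (fun x : Σ c : C, (c ⟶ d) => Q x.1) ⟨d, 𝟙 d⟩) _
  exact NatTrans.epi_of_epi_app _

variable [HasLimits G] [AB5 G]

lemma freeFunctor_isFlat (Q : C → G) (hQ : ∀ c, IsFlatG J (Q c)) :
    IsFlat J (freeFunctor Q) := by
  intro K E i p w hS
  haveI : Mono i := hS.mono_f
  haveI : Epi p := hS.epi_g
  have wd : ∀ d : C, i.app d ≫ p.app d = 0 := fun d => by
    rw [← NatTrans.comp_app, w]; rfl
  have hSo : ∀ d : C, (ShortComplex.mk (i.app d) (p.app d) (wd d)).ShortExact := fun d =>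
    hS.map_of_exact ((evaluation C G).obj d)
  -- objectwise splittings of the dual, from Lemma A
  have spld : ∀ d : C, (dSCG J (ShortComplex.mk (i.app d) (p.app d) (wd d))).Splitting :=
    fun d => by
      haveI : Nonempty (Σ c : C, (c ⟶ d)) := ⟨⟨d, 𝟙 d⟩⟩
      exact (sigma_flat_isPure J (fun x : Σ c : C, (c ⟶ d) => Q x.1)
        (fun x => hQ x.1) (i.app d) (p.app d) (wd d) (hSo d)).some
  -- epi of the dual g
  haveI hepiapp : ∀ dd : Cᵒᵖ, Epi ((dMap J i).app dd) := fun dd => (spld dd.unop).epi_g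
  have hgepi : Epi (dSC J (ShortComplex.mk i p w)).g := by
    show Epi (dMap J i)
    exact NatTrans.epi_of_epi_app _
  -- exactness of the dual complex
  have hkerlim : IsLimit (KernelFork.ofι (dSC J (ShortComplex.mk i p w)).f
      (dSC J (ShortComplex.mk i p w)).zero) := by
    apply evaluationJointlyReflectsLimits
    intro dd
    refine (KernelFork.isLimitMapConeEquiv _ _).symm ?_
    haveI : Epi (p.app dd.unop) := (hSo dd.unop).epi_g
    exact pMapIsKernel J (i.app dd.unop) (p.app dd.unop) (wd dd.unop)
      ((hSo dd.unop).gIsCokernel)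
  have hex : (dSC J (ShortComplex.mk i p w)).Exact :=
    ShortComplex.exact_of_f_is_kernel _ hkerlim
  -- the retraction
  have hPB : ∀ c : C, (ShortComplex.mk
      (pullback.lift (i.app c) (0 : K.obj c ⟶ Q c) (by rw [wd c, zero_comp]))
      (pullback.snd (p.app c) (Sigma.ι (fun x : Σ c' : C, (c' ⟶ c) => Q x.1) ⟨c, 𝟙 c⟩))
      (pullback.lift_snd _ _ _)).ShortExact :=
    fun c => pullback_shortExact (hSo c) _
  have ρ : ∀ c : C, (dSCG J (ShortComplex.mk
      (pullback.lift (i.app c) (0 : K.obj c ⟶ Q c) (by rw [wd c, zero_comp]))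
      (pullback.snd (p.app c) (Sigma.ι (fun x : Σ c' : C, (c' ⟶ c) => Q x.1) ⟨c, 𝟙 c⟩))
      (pullback.lift_snd _ _ _))).Splitting := fun c => (hQ c _ _ _ (hPB c)).some
  let rc : ∀ c : C, pObj J (E.obj c) ⟶ pObj J (Q c) := fun c =>
    pMap J (pullback.fst (p.app c) (Sigma.ι (fun x : Σ c' : C, (c' ⟶ c) => Q x.1) ⟨c, 𝟙 c⟩))
      ≫ (ρ c).r
  let Rapp : ∀ d : C, pObj J (E.obj d) ⟶ pObj J ((freeFunctor Q).obj d) := fun d =>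
    tr J (Sigma.desc (fun x : Σ c : C, (c ⟶ d) =>
      tr J (pMap J (E.map x.2) ≫ rc x.1)))
  have hRproj : ∀ (d : C) (x : Σ c : C, (c ⟶ d)),
      Rapp d ≫ pMap J (Sigma.ι (fun y : Σ c : C, (c ⟶ d) => Q y.1) x)
        = pMap J (E.map x.2) ≫ rc x.1 :=
    fun d x => tr_desc_proj J _ _ x
  have hrc : ∀ c : C, pMap J (p.app c) ≫ rc c
      = pMap J (Sigma.ι (fun x : Σ c' : C, (c' ⟶ c) => Q x.1) ⟨c, 𝟙 c⟩) := by
    intro c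
    show pMap J (p.app c) ≫ pMap J (pullback.fst (p.app c) _) ≫ (ρ c).r = _
    rw [← Category.assoc, ← pMap_comp, pullback.condition, pMap_comp, Category.assoc]
    have h1 := (ρ c).f_r
    dsimp only [dSCG] at h1
    rw [h1, Category.comp_id]
  let Rnat : (dObj J E) ⟶ (dObj J (freeFunctor Q)) := {
    app := fun dd => Rapp dd.unop
    naturality := fun d1 d2 η => by
      apply pSigma_hom_ext J
      intro x
      calc ((dObj J E).map η ≫ Rapp d2.unop) ≫ pMap J (Sigma.ι _ x)
          = pMap J (E.map η.unop) ≫ (Rapp d2.unop ≫ pMap J (Sigma.ι _ x)) := by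
            rw [Category.assoc]
        _ = pMap J (E.map η.unop) ≫ pMap J (E.map x.2) ≫ rc x.1 := by rw [hRproj]
        _ = pMap J (E.map (x.2 ≫ η.unop)) ≫ rc x.1 := by
            rw [Functor.map_comp, pMap_comp, Category.assoc]
        _ = Rapp d1.unop ≫ pMap J (Sigma.ι (fun y : Σ c : C, (c ⟶ d1.unop) => Q y.1)
              ⟨x.1, x.2 ≫ η.unop⟩) := (hRproj d1.unop ⟨x.1, x.2 ≫ η.unop⟩).symm
        _ = Rapp d1.unop ≫ pMap J (Sigma.ι (fun y : Σ c : C, (c ⟶ d2.unop) => Q y.1) x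
              ≫ (freeFunctor Q).map η.unop) := by rw [freeFunctor_map, Sigma.ι_desc]
        _ = (Rapp d1.unop ≫ (dObj J (freeFunctor Q)).map η) ≫ pMap J (Sigma.ι _ x) := by
            rw [pMap_comp, ← Category.assoc] }
  have hfr : (dSC J (ShortComplex.mk i p w)).f ≫ Rnat = 𝟙 _ := by
    ext dd
    show pMap J (p.app dd.unop) ≫ Rapp dd.unop = 𝟙 _
    apply pSigma_hom_ext J
    intro x
    calc (pMap J (p.app dd.unop) ≫ Rapp dd.unop) ≫ pMap J (Sigma.ι _ x)
        = pMap J (p.app dd.unop) ≫ (Rapp dd.unop ≫ pMap J (Sigma.ι _ x)) := by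
          rw [Category.assoc]
      _ = pMap J (p.app dd.unop) ≫ pMap J (E.map x.2) ≫ rc x.1 := by rw [hRproj]
      _ = pMap J (E.map x.2 ≫ p.app dd.unop) ≫ rc x.1 := by
          rw [pMap_comp, Category.assoc]
      _ = pMap J (p.app x.1 ≫ (freeFunctor Q).map x.2) ≫ rc x.1 := by
          rw [NatTrans.naturality]
      _ = pMap J ((freeFunctor Q).map x.2) ≫ pMap J (p.app x.1) ≫ rc x.1 := by
          rw [pMap_comp, Category.assoc]
      _ = pMap J ((freeFunctor Q).map x.2) ≫ pMap J (Sigma.ι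
            (fun y : Σ c' : C, (c' ⟶ x.1) => Q y.1) ⟨x.1, 𝟙 x.1⟩) := by rw [hrc]
      _ = pMap J (Sigma.ι (fun y : Σ c' : C, (c' ⟶ x.1) => Q y.1) ⟨x.1, 𝟙 x.1⟩
            ≫ (freeFunctor Q).map x.2) := by rw [pMap_comp]
      _ = pMap J (Sigma.ι (fun y : Σ c : C, (c ⟶ dd.unop) => Q y.1) x) := by
          rw [freeFunctor_map, Sigma.ι_desc, Category.id_comp]
      _ = 𝟙 _ ≫ pMap J (Sigma.ι (fun y : Σ c : C, (c ⟶ dd.unop) => Q y.1) x) := by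
          rw [Category.id_comp]
  exact ⟨ShortComplex.Splitting.ofExactOfRetraction _ hex Rnat hfr hgepi⟩

end FunctorLevel



section Complexes

variable {D : Type v} [SmallCategory D]

/-- A *flat complex*: an acyclic complex of flat functors all of whose kernels of
differentials are flat (equivalently, a pure acyclic complex of flat functors). -/
def IsFlatComplex (J : G) (X : CochainComplex (D ⥤ G) ℤ) : Prop :=
  (∀ n, X.ExactAt n) ∧ (∀ n, IsFlat J (X.X n)) ∧
    ∀ n : ℤ, IsFlat J (kernel (X.d n (n + 1)))

/-- A *cotorsion complex*: an acyclic complex of cotorsion functors all of whose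
kernels of differentials are cotorsion. -/
def IsCotorsionComplex (J : G) (X : CochainComplex (D ⥤ G) ℤ) : Prop :=
  (∀ n, X.ExactAt n) ∧ (∀ n, IsCotorsion J (X.X n)) ∧
    ∀ n : ℤ, IsCotorsion J (kernel (X.d n (n + 1)))

/-- A complex is *dg-cotorsion* if every short exact sequence of complexes
`0 → X → E → F → 0` with `F` a flat complex splits. -/
def IsDgCotorsion (J : G) (X : CochainComplex (D ⥤ G) ℤ) : Prop :=
  ∀ ⦃E F : CochainComplex (D ⥤ G) ℤ⦄ (i : X ⟶ E) (p : E ⟶ F) (w : i ≫ p = 0),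
    (ShortComplex.mk i p w).ShortExact → IsFlatComplex J F →
      Nonempty (ShortComplex.mk i p w).Splitting

end Complexes


section Statement

variable {C : Type v} [SmallCategory C]
variable [HasLimits G] [HasColimits G] [AB5 G] [HasSeparator G]


/-- The category `A = Fun(C, G)` has enough flat objects: every functor admits an
epimorphism from a flat functor (assuming every object of `G` admits an epimorphism
from a flat object of `G`). -/
theorem statement10 (J : G) [Injective J] (hJ : IsCoseparator J)
    (hG : ∀ X : G, ∃ (P : G) (p : P ⟶ X), IsFlatG J P ∧ Epi p) :
    ∀ F : C ⥤ G, ∃ (P : C ⥤ G) (p : P ⟶ F), IsFlat J P ∧ Epi p := by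
  intro F
  choose Q q hflat hepi using fun c : C => hG (F.obj c)
  exact ⟨freeFunctor Q, freeCounit Q F q, freeFunctor_isFlat J Q hflat,
    freeCounit_epi Q F q hepi⟩

end Statement

end FlatFunctorsPaper
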